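/- Consider the CycIP setup in a real Hilbert space X, and suppose that ⋂_{i∈I₁} C_i ∩ ⋂_{i∈I₀} int C_i ≠ ∅ and that the control is quasicyclic with some quasiperiod M ≥ 1. Then for the sequence generated by x_{k+1} := T_{i(k)} x_k from any x₀ ∈ X, one has x_k − x_{k+1} → 0 and max_{i∈I} d_{C_i}(x_k) → 0 as k → ∞; in particular, every weak cluster point of (x_k)_{k∈ℕ} lies in C := ⋂_{i∈I} C_i. -/

import Mathlib

open scoped RealInnerProductSpace
open Metric

lemma proj_var {X : Type*} [NormedAddCommGroup X] [InnerProductSpace ℝ X]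
    {s : Set X} (hconv : Convex ℝ s) {x p : X} (hp : p ∈ s)
    (hd : dist x p = Metric.infDist x s) : ∀ y ∈ s, ⟪x - p, y - p⟫ ≤ 0 := by
  rw [← norm_eq_iInf_iff_real_inner_le_zero hconv hp]
  rw [dist_eq_norm] at hd
  rw [hd, infDist_eq_iInf]
  simp [dist_eq_norm]

lemma expand_sq {X : Type*} [NormedAddCommGroup X] [InnerProductSpace ℝ X]
    (a b : X) (t : ℝ) : ‖a - t • b‖^2 = ‖a‖^2 - 2*t*⟪a,b⟫ + t^2*‖b‖^2 := by
  rw [norm_sub_sq_real, real_inner_smul_right, norm_smul, Real.norm_eq_abs, mul_pow, sq_abs]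
  ring

lemma relaxed_fejer {X : Type*} [NormedAddCommGroup X] [InnerProductSpace ℝ X]
    {s : Set X} (hconv : Convex ℝ s) {x p z : X} (hp : p ∈ s) (hz : z ∈ s)
    (hd : dist x p = Metric.infDist x s) {l : ℝ} (h0 : 0 < l) (h2 : l < 2) :
    ‖((1-l)•x + l•p) - z‖^2 ≤ ‖x - z‖^2 - ((2-l)/l) * ‖x - ((1-l)•x + l•p)‖^2 := by
  have h1 : (1-l)•x + l•p = x - l • (x - p) := by
    rw [smul_sub]; module
  have h2' : x - ((1-l)•x + l•p) = l • (x - p) := by rw [h1]; abel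
  have h3 : ((1-l)•x + l•p) - z = (x - z) - l • (x - p) := by rw [h1]; abel
  rw [h2', h3, expand_sq]
  have hvar : ⟪x - p, z - p⟫ ≤ 0 := proj_var hconv hp hd z hz
  have hkey : ⟪x - z, x - p⟫ ≥ ‖x - p‖^2 := by
    have : ⟪x - z, x - p⟫ = ⟪x - p, x - p⟫ - ⟪x - p, z - p⟫ := by
      rw [real_inner_comm, ← inner_sub_right]
      congr 1; abel
    rw [this, real_inner_self_eq_norm_sq]
    linarith
  have hn : ‖l • (x - p)‖^2 = l^2 * ‖x - p‖^2 := by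
    rw [norm_smul, Real.norm_eq_abs, mul_pow, sq_abs]
  rw [hn]
  have hdiv : (2-l)/l * (l^2 * ‖x-p‖^2) = (2-l)*l*‖x-p‖^2 := by
    field_simp
  rw [hdiv]
  nlinarith [sq_nonneg ‖x - p‖, hkey]

lemma intrepid_fejer {X : Type*} [NormedAddCommGroup X] [InnerProductSpace ℝ X]
    {Z : Set X} (hconv : Convex ℝ Z) {β ε : ℝ} (hβ : 0 < β) (hε : 0 < ε) (hεβ : ε ≤ β)
    {x p z q Tx : X} (hp : p ∈ Z) (hdp : dist x p = Metric.infDist x Z)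
    (hq : q ∈ Z) (hdq : dist z q = Metric.infDist z Z)
    (hzd : Metric.infDist z Z ≤ β - ε)
    (hT1 : 2*β ≤ Metric.infDist x Z → Tx = p)
    (hT2 : Metric.infDist x Z ≤ β → Tx = x)
    (hT3 : β < Metric.infDist x Z → Metric.infDist x Z < 2*β →
        Tx = x + (1 - Metric.infDist x Z/β) • (x - p)) :
    ‖Tx - z‖^2 ≤ ‖x - z‖^2 - (ε/β) * ‖x - Tx‖^2 := by
  set d := Metric.infDist x Z with hdef
  have hdnorm : ‖x - p‖ = d := by rw [← hdp, dist_eq_norm]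
  have hznorm : ‖z - q‖ ≤ β - ε := by rw [← hdq, dist_eq_norm] at hzd; exact hzd
  have hd0 : 0 ≤ d := le_trans (norm_nonneg _) (le_of_eq hdnorm)
  clear_value d
  have hdp' : dist x p = Metric.infDist x Z := by rw [← hdef]; exact hdp
  -- key inner product bound: ⟪x - z, x - p⟫ ≥ d^2 - d*(β-ε)
  have hkey : ⟪x - z, x - p⟫ ≥ d^2 - d*(β-ε) := by
    have hvq : ⟪x - p, q - p⟫ ≤ 0 := proj_var hconv hp hdp' q hq
    have hsplit : ⟪x - z, x - p⟫ = ⟪x - p, x - p⟫ - ⟪x - p, z - q⟫ - ⟪x - p, q - p⟫ := by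
      rw [real_inner_comm, ← inner_sub_right, ← inner_sub_right]
      congr 1; abel
    have hcs : ⟪x - p, z - q⟫ ≤ ‖x - p‖ * ‖z - q‖ := real_inner_le_norm _ _
    have hbd : ⟪x - p, z - q⟫ ≤ d * (β - ε) := by
      calc ⟪x - p, z - q⟫ ≤ ‖x - p‖ * ‖z - q‖ := hcs
        _ ≤ d * (β - ε) := by
            rw [hdnorm]
            exact mul_le_mul_of_nonneg_left hznorm hd0
    rw [hsplit, real_inner_self_eq_norm_sq, hdnorm]
    linarith
  rcases le_or_gt d β with hc1 | hc1
  · -- Tx = x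
    rw [hT2 hc1]
    simp [sub_self]
  rcases lt_or_ge d (2*β) with hc2 | hc2
  · -- middle case
    have hTx := hT3 hc1 hc2
    set t : ℝ := d/β - 1 with htdef
    have ht0 : 0 < t := by
      have : 1 < d/β := (one_lt_div hβ).2 hc1
      simp [htdef]; linarith
    have ht1 : t < 1 := by
      have : d/β < 2 := (div_lt_iff₀ hβ).2 (by linarith)
      simp [htdef]; linarith
    have htb : t * β = d - β := by rw [htdef, sub_mul, div_mul_cancel₀ d hβ.ne', one_mul]
    have hneg : (1 - d/β) = -t := by rw [htdef]; ring
    have hxT : x - Tx = t • (x - p) := by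
      rw [hTx, hneg]; module
    have hTz : Tx - z = (x - z) - t • (x - p) := by
      rw [hTx, hneg]; module
    clear_value t
    rw [hxT, hTz, expand_sq]
    have hn : ‖t • (x - p)‖^2 = t^2 * d^2 := by
      rw [norm_smul, Real.norm_eq_abs, mul_pow, sq_abs, hdnorm]
    rw [hn, hdnorm]
    have key2 : (1 + ε/β)*(t*d) ≤ 2*(d-β) + 2*ε := by
      rw [← mul_le_mul_iff_of_pos_right (show (0:ℝ) < β^2 by positivity)]
      have e1 : (1 + ε/β)*β = β + ε := by field_simp
      have heq : (1 + ε/β)*(t*d)*β^2 = ((1+ε/β)*β)*(((t*β))*d) := by ring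
      rw [heq, e1, htb]
      nlinarith [mul_nonneg (by linarith : (0:ℝ) ≤ 2*β - d)
          (mul_nonneg (by linarith : (0:ℝ) ≤ β + ε) (by linarith : (0:ℝ) ≤ d - β)),
        mul_nonneg (by linarith : (0:ℝ) ≤ 2*β - d) (mul_nonneg hε.le hβ.le)]
    have h5 := mul_le_mul_of_nonneg_left key2 (mul_nonneg ht0.le hd0)
    have h6 := mul_le_mul_of_nonneg_left hkey.le (by linarith : (0:ℝ) ≤ 2*t)
    nlinarith [h5, h6]
  · -- far case : Tx = p
    have hTx := hT1 hc2
    rw [hTx]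
    have h1 : p - z = (x - z) - (1:ℝ) • (x - p) := by module
    rw [h1, expand_sq, hdnorm]
    have hgain : ε/β * d^2 ≤ d^2 - 2*d*(β-ε) := by
      rw [div_mul_eq_mul_div, div_le_iff₀ hβ]
      nlinarith [mul_nonneg (mul_nonneg (by linarith : (0:ℝ) ≤ d - 2*β)
        (by linarith : (0:ℝ) ≤ β - ε)) hd0]
    linarith [hkey, hgain]

lemma interior_margin {X : Type*} [NormedAddCommGroup X] [InnerProductSpace ℝ X]
    {Z : Set X} (hconv : Convex ℝ Z) {β δ : ℝ} (hβ : 0 < β) (hδ : 0 < δ)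
    {z : X} (PZf : X → X) (hPZ : ∀ y, PZf y ∈ Z ∧ dist y (PZf y) = Metric.infDist y Z)
    (hball : Metric.ball z δ ⊆ {y : X | Metric.infDist y Z ≤ β}) :
    Metric.infDist z Z ≤ β - min (δ/2) β := by
  have hε2 : min (δ/2) β ≤ β := min_le_right _ _
  rcases eq_or_lt_of_le (Metric.infDist_nonneg : 0 ≤ Metric.infDist z Z) with h0 | h0
  · rw [← h0]; linarith
  · set q := PZf z with hqdef
    have hq : q ∈ Z := (hPZ z).1
    have hdq : dist z q = Metric.infDist z Z := (hPZ z).2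
    set dz := Metric.infDist z Z with hdzdef
    have hzq : ‖z - q‖ = dz := by rw [← hdq, dist_eq_norm]
    have hdzpos : 0 < dz := h0
    set w := z + (δ/(2*dz)) • (z - q) with hwdef
    have hwball : w ∈ Metric.ball z δ := by
      rw [Metric.mem_ball, dist_eq_norm]
      have hnorm : ‖w - z‖ = δ/2 := by
        rw [show w - z = (δ/(2*dz)) • (z - q) by rw [hwdef]; abel,
          norm_smul, Real.norm_eq_abs, abs_of_pos (by positivity), hzq]
        field_simp
      rw [hnorm]; linarith
    have hwle : Metric.infDist w Z ≤ β := hball hwball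
    set y := PZf w with hydef
    have hy : y ∈ Z := (hPZ w).1
    have hdy : dist w y = Metric.infDist w Z := (hPZ w).2
    have hwy : ‖w - y‖ ≤ β := by rw [← hdy, dist_eq_norm] at hwle; exact hwle
    -- key: ⟪w - y, z - q⟫ ≥ dz^2 + (δ/2)*dz
    have hvar : ⟪z - q, y - q⟫ ≤ 0 := proj_var hconv hq hdq y hy
    have hsplit : ⟪w - y, z - q⟫ =
        ⟪z - q, z - q⟫ + (δ/(2*dz)) * ⟪z - q, z - q⟫ - ⟪z - q, y - q⟫ := by
      have : w - y = (z - q) + (δ/(2*dz)) • (z - q) + (q - y) := by rw [hwdef]; abel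
      rw [this, inner_add_left, inner_add_left, real_inner_smul_left]
      have : ⟪q - y, z - q⟫ = -⟪z - q, y - q⟫ := by
        rw [real_inner_comm, ← inner_neg_right]
        congr 1; abel
      rw [this]; ring
    have hself : ⟪z - q, z - q⟫ = dz^2 := by rw [real_inner_self_eq_norm_sq, hzq]
    have hkey : ⟪w - y, z - q⟫ ≥ dz^2 + (δ/2)*dz := by
      rw [hsplit, hself]
      have : (δ/(2*dz)) * dz^2 = (δ/2)*dz := by field_simp
      linarith [this]
    have hcs : ⟪w - y, z - q⟫ ≤ ‖w - y‖ * dz := by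
      calc ⟪w - y, z - q⟫ ≤ ‖w - y‖ * ‖z - q‖ := real_inner_le_norm _ _
        _ = ‖w - y‖ * dz := by rw [hzq]
    have hge : dz + δ/2 ≤ ‖w - y‖ := by
      have h1 : (dz + δ/2) * dz ≤ ‖w - y‖ * dz := by nlinarith [hkey, hcs]
      exact le_of_mul_le_mul_right h1 hdzpos
    have : dz ≤ β - δ/2 := by linarith
    calc dz ≤ β - δ/2 := this
      _ ≤ β - min (δ/2) β := by
          have := min_le_left (δ/2) β
          linarith

lemma intrepid_dist {X : Type*} [NormedAddCommGroup X] [InnerProductSpace ℝ X]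
    {Z : Set X} {β : ℝ} (hβ : 0 < β) {x p Tx : X} (hp : p ∈ Z)
    (hdp : dist x p = Metric.infDist x Z)
    (hT1 : 2*β ≤ Metric.infDist x Z → Tx = p)
    (hT2 : Metric.infDist x Z ≤ β → Tx = x)
    (hT3 : β < Metric.infDist x Z → Metric.infDist x Z < 2*β →
        Tx = x + (1 - Metric.infDist x Z/β) • (x - p)) :
    Metric.infDist x {y : X | Metric.infDist y Z ≤ β} ≤ ‖x - Tx‖ := by
  set d := Metric.infDist x Z with hdef
  have hdnorm : ‖x - p‖ = d := by rw [← hdp, dist_eq_norm]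
  rcases le_or_gt d β with hc1 | hc1
  · have : x ∈ {y : X | Metric.infDist y Z ≤ β} := hc1
    rw [Metric.infDist_zero_of_mem this]
    exact norm_nonneg _
  rcases lt_or_ge d (2*β) with hc2 | hc2
  · -- middle: witness w
    have hd0 : 0 < d := lt_trans hβ hc1
    set w := x + ((d-β)/d) • (p - x) with hwdef
    have hwmem : w ∈ {y : X | Metric.infDist y Z ≤ β} := by
      have hwp : ‖w - p‖ = β := by
        have : w - p = (β/d) • (x - p) := by
          rw [hwdef]
          have h1 : ((d-β)/d) + β/d = 1 := by field_simp; ring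
          match_scalars <;> field_simp <;> ring
        rw [this, norm_smul, Real.norm_eq_abs, abs_of_pos (by positivity), hdnorm]
        field_simp
      have : Metric.infDist w Z ≤ dist w p := Metric.infDist_le_dist_of_mem hp
      rw [dist_eq_norm, hwp] at this
      exact this
    have hxw : ‖x - w‖ = d - β := by
      rw [show x - w = ((d-β)/d) • (x - p) by rw [hwdef]; module,
        norm_smul, Real.norm_eq_abs, abs_of_pos (div_pos (by linarith) hd0), hdnorm]
      field_simp
    have hxT : ‖x - Tx‖ = (d-β)*d/β := by
      rw [hT3 hc1 hc2,
        show x - (x + (1 - d/β) • (x - p)) = ((d-β)/β) • (x - p) by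
          have : (1 - d/β) = -((d-β)/β) := by field_simp; ring
          rw [this]; module,
        norm_smul, Real.norm_eq_abs, abs_of_pos (div_pos (by linarith) hβ), hdnorm]
      ring
    calc Metric.infDist x {y : X | Metric.infDist y Z ≤ β} ≤ dist x w :=
          Metric.infDist_le_dist_of_mem hwmem
      _ = d - β := by rw [dist_eq_norm, hxw]
      _ ≤ ‖x - Tx‖ := by
          rw [hxT, le_div_iff₀ hβ]
          nlinarith [sq_nonneg (d-β)]
  · have hTx := hT1 hc2
    have hpmem : p ∈ {y : X | Metric.infDist y Z ≤ β} := by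
      have : Metric.infDist p Z = 0 := Metric.infDist_zero_of_mem hp
      simp [Set.mem_setOf_eq, this, hβ.le]
    calc Metric.infDist x {y : X | Metric.infDist y Z ≤ β} ≤ dist x p :=
          Metric.infDist_le_dist_of_mem hpmem
      _ = ‖x - Tx‖ := by rw [dist_eq_norm, hTx]


/-- asymptotic regularity and feasibility of the gaps.
CycIP setup.  Suppose `⋂_{i∈I₁} C i ∩ ⋂_{i∈I₀} int (C i) ≠ ∅` and the control
is quasicyclic with quasiperiod `M ≥ 1`.  Then `x k − x (k+1) → 0` and
`max_{i∈I} d_{C i}(x k) → 0`; in particular, every weak cluster point of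
`(x k)` lies in `C := ⋂ i, C i`. -/
theorem cycIP_asymptotic_regularity
    {X : Type*} [NormedAddCommGroup X] [InnerProductSpace ℝ X] [CompleteSpace X]
    {ι : Type*} [Fintype ι] [Nonempty ι] (I₀ : Set ι)
    (C : ι → Set X)
    (hC : ∀ i, (C i).Nonempty ∧ IsClosed (C i) ∧ Convex ℝ (C i))
    (Z : ι → Set X) (β : ι → ℝ) (PZ : ι → X → X)
    (hI₀ : ∀ i ∈ I₀, (Z i).Nonempty ∧ IsClosed (Z i) ∧ Convex ℝ (Z i) ∧
      0 < β i ∧ C i = {x : X | Metric.infDist x (Z i) ≤ β i} ∧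
      ∀ x : X, PZ i x ∈ Z i ∧ dist x (PZ i x) = Metric.infDist x (Z i))
    (lam : ι → ℝ) (PC : ι → X → X)
    (hI₁ : ∀ i ∉ I₀, lam i ∈ Set.Ioo (0 : ℝ) 2 ∧
      ∀ x : X, PC i x ∈ C i ∧ dist x (PC i x) = Metric.infDist x (C i))
    (T : ι → X → X)
    (hT₀ : ∀ i ∈ I₀, ∀ x : X,
      (2 * β i ≤ Metric.infDist x (Z i) → T i x = PZ i x) ∧
      (Metric.infDist x (Z i) ≤ β i → T i x = x) ∧
      (β i < Metric.infDist x (Z i) → Metric.infDist x (Z i) < 2 * β i →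
        T i x = x + (1 - Metric.infDist x (Z i) / β i) • (x - PZ i x)))
    (hT₁ : ∀ i ∉ I₀, ∀ x : X, T i x = (1 - lam i) • x + lam i • PC i x)
    (hfeas : ((⋂ i ∈ I₀ᶜ, C i) ∩ ⋂ i ∈ I₀, interior (C i)).Nonempty)
    (sel : ℕ → ι) (hsel : ∀ i, {k : ℕ | sel k = i}.Infinite)
    (M : ℕ) (hM : 1 ≤ M)
    (hqc : ∀ k : ℕ, ∀ i : ι, ∃ j < M, sel (k + j) = i)
    (x : ℕ → X) (hx : ∀ k : ℕ, x (k + 1) = T (sel k) (x k)) :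
    Filter.Tendsto (fun k => x k - x (k + 1)) Filter.atTop (nhds 0) ∧
    Filter.Tendsto (fun k => ⨆ i, Metric.infDist (x k) (C i))
      Filter.atTop (nhds 0) ∧
    ∀ xbar : X,
      (∃ φ : ℕ → ℕ, StrictMono φ ∧ ∀ u : X,
        Filter.Tendsto (fun k => ⟪x (φ k), u⟫) Filter.atTop (nhds ⟪xbar, u⟫)) →
      xbar ∈ ⋂ i, C i := by
  classical
  obtain ⟨z, hz1, hz2⟩ := hfeas
  have hzC : ∀ i, z ∈ C i := by
    intro i
    by_cases hi : i ∈ I₀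
    · exact interior_subset (Set.mem_iInter₂.1 hz2 i hi)
    · exact Set.mem_iInter₂.1 hz1 i hi
  -- margin at z for the enlarged sets
  have hεex : ∀ i : ι, ∃ ε : ℝ, 0 < ε ∧ (i ∈ I₀ →
      ε ≤ β i ∧ Metric.infDist z (Z i) ≤ β i - ε) := by
    intro i
    by_cases hi : i ∈ I₀
    · obtain ⟨hZne, hZcl, hZconv, hβpos, hCeq, hPZ⟩ := hI₀ i hi
      have hzint : z ∈ interior (C i) := Set.mem_iInter₂.1 hz2 i hi
      obtain ⟨δ, hδpos, hball⟩ := Metric.isOpen_iff.1 isOpen_interior z hzint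
      have hball' : Metric.ball z δ ⊆ {y : X | Metric.infDist y (Z i) ≤ β i} := by
        intro y hy
        have : y ∈ C i := interior_subset (hball hy)
        rwa [hCeq] at this
      refine ⟨min (δ/2) (β i), lt_min (by linarith) hβpos,
        fun _ => ⟨min_le_right _ _, ?_⟩⟩
      exact interior_margin hZconv hβpos hδpos (PZ i) hPZ hball'
    · exact ⟨1, one_pos, fun h => absurd h hi⟩
  choose ε hεpos hεI₀ using hεex
  -- the common Fejér constant
  set κ : ι → ℝ := fun i => if i ∈ I₀ then ε i / β i else (2 - lam i)/lam i with hκdef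
  have hκpos : ∀ i, 0 < κ i := by
    intro i; by_cases hi : i ∈ I₀
    · simp only [hκdef, if_pos hi]
      exact div_pos (hεpos i) (hI₀ i hi).2.2.2.1
    · simp only [hκdef, if_neg hi]
      obtain ⟨⟨hl0, hl2⟩, -⟩ := hI₁ i hi
      exact div_pos (by linarith) hl0
  set κm : ℝ := Finset.univ.inf' Finset.univ_nonempty κ with hκmdef
  have hκm0 : 0 < κm := (Finset.lt_inf'_iff _).2 fun i _ => hκpos i
  have hκmle : ∀ i, κm ≤ κ i := fun i => Finset.inf'_le _ (Finset.mem_univ i)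
  -- Fejér monotonicity
  have hstep : ∀ k, ‖x (k+1) - z‖^2 ≤ ‖x k - z‖^2 - κm * ‖x k - x (k+1)‖^2 := by
    intro k
    have hxk : x (k+1) = T (sel k) (x k) := hx k
    by_cases hi : sel k ∈ I₀
    · obtain ⟨hZne, hZcl, hZconv, hβpos, hCeq, hPZ⟩ := hI₀ (sel k) hi
      obtain ⟨h1, h2, h3⟩ := hT₀ (sel k) hi (x k)
      have hεi := hεI₀ (sel k) hi
      have hmain := intrepid_fejer (Tx := x (k+1)) hZconv hβpos (hεpos (sel k)) hεi.1
        (hPZ (x k)).1 (hPZ (x k)).2 (hPZ z).1 (hPZ z).2 hεi.2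
        (fun h => by rw [hxk]; exact h1 h)
        (fun h => by rw [hxk]; exact h2 h)
        (fun h h' => by rw [hxk]; exact h3 h h')
      have hκi : κm ≤ ε (sel k) / β (sel k) := by
        have := hκmle (sel k); simpa [hκdef, if_pos hi] using this
      nlinarith [sq_nonneg ‖x k - x (k+1)‖,
        mul_le_mul_of_nonneg_right hκi (sq_nonneg ‖x k - x (k+1)‖)]
    · obtain ⟨⟨hl0, hl2⟩, hPC⟩ := hI₁ (sel k) hi
      have hmain := relaxed_fejer (hC (sel k)).2.2 (hPC (x k)).1 (hzC (sel k))
        (hPC (x k)).2 hl0 hl2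
      have hTx : x (k+1) = (1 - lam (sel k)) • (x k) + lam (sel k) • (PC (sel k) (x k)) := by
        rw [hxk, hT₁ (sel k) hi]
      rw [← hTx] at hmain
      have hκi : κm ≤ (2 - lam (sel k)) / lam (sel k) := by
        have := hκmle (sel k); simpa [hκdef, if_neg hi] using this
      nlinarith [sq_nonneg ‖x k - x (k+1)‖,
        mul_le_mul_of_nonneg_right hκi (sq_nonneg ‖x k - x (k+1)‖)]
  -- the anchor distances converge
  set a : ℕ → ℝ := fun k => ‖x k - z‖^2 with hadef
  have hamono : Antitone a := antitone_nat_of_succ_le (fun k => by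
    show ‖x (k+1) - z‖^2 ≤ ‖x k - z‖^2
    have h := hstep k
    nlinarith [mul_nonneg hκm0.le (sq_nonneg ‖x k - x (k+1)‖)])
  have habdd : BddBelow (Set.range a) := by
    refine ⟨0, ?_⟩
    rintro y ⟨k, rfl⟩
    exact sq_nonneg _
  have haconv : Filter.Tendsto a Filter.atTop (nhds (⨅ k, a k)) :=
    tendsto_atTop_ciInf hamono habdd
  have hashift : Filter.Tendsto (fun k => a (k+1)) Filter.atTop (nhds (⨅ k, a k)) :=
    haconv.comp (Filter.tendsto_add_atTop_nat 1)
  have hdiff : Filter.Tendsto (fun k => a k - a (k+1)) Filter.atTop (nhds 0) := by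
    have := haconv.sub hashift
    simpa using this
  -- step sizes tend to zero
  have hs2 : Filter.Tendsto (fun k => ‖x k - x (k+1)‖^2) Filter.atTop (nhds 0) := by
    have hupper : Filter.Tendsto (fun k => (1/κm) * (a k - a (k+1))) Filter.atTop (nhds 0) := by
      have := hdiff.const_mul (1/κm)
      simpa using this
    refine tendsto_of_tendsto_of_tendsto_of_le_of_le tendsto_const_nhds hupper
      (fun k => sq_nonneg _) (fun k => ?_)
    have h2 : κm * ‖x k - x (k+1)‖^2 ≤ a k - a (k+1) := by
      show κm * ‖x k - x (k+1)‖^2 ≤ ‖x k - z‖^2 - ‖x (k+1) - z‖^2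
      linarith [hstep k]
    calc ‖x k - x (k+1)‖^2 = (1/κm) * (κm * ‖x k - x (k+1)‖^2) := by
          field_simp
      _ ≤ (1/κm) * (a k - a (k+1)) := by
          apply mul_le_mul_of_nonneg_left h2 (by positivity)
  have hsn : Filter.Tendsto (fun k => ‖x k - x (k+1)‖) Filter.atTop (nhds 0) := by
    have h := (Real.continuous_sqrt.tendsto 0).comp hs2
    simp only [Function.comp_def, Real.sqrt_zero] at h
    convert h using 2 with k
    rw [Real.sqrt_sq (norm_nonneg _)]
  have goal1 : Filter.Tendsto (fun k => x k - x (k + 1)) Filter.atTop (nhds 0) :=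
    tendsto_zero_iff_norm_tendsto_zero.2 hsn
  -- per-step distance bound
  set c : ι → ℝ := fun i => if i ∈ I₀ then 1 else 1/lam i with hcdef
  set cm : ℝ := max (Finset.univ.sup' Finset.univ_nonempty c) 1 with hcmdef
  have hcm1 : (1:ℝ) ≤ cm := le_max_right _ _
  have hcm0 : (0:ℝ) ≤ cm := by linarith
  have hcile : ∀ i, c i ≤ cm :=
    fun i => le_trans (Finset.le_sup' c (Finset.mem_univ i)) (le_max_left _ _)
  have hsd : ∀ k, Metric.infDist (x k) (C (sel k)) ≤ cm * ‖x k - x (k+1)‖ := by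
    intro k
    have hxk : x (k+1) = T (sel k) (x k) := hx k
    by_cases hi : sel k ∈ I₀
    · obtain ⟨hZne, hZcl, hZconv, hβpos, hCeq, hPZ⟩ := hI₀ (sel k) hi
      obtain ⟨h1, h2, h3⟩ := hT₀ (sel k) hi (x k)
      have hmain := intrepid_dist (Tx := x (k+1)) hβpos (hPZ (x k)).1 (hPZ (x k)).2
        (fun h => by rw [hxk]; exact h1 h)
        (fun h => by rw [hxk]; exact h2 h)
        (fun h h' => by rw [hxk]; exact h3 h h')
      rw [← hCeq] at hmain
      calc Metric.infDist (x k) (C (sel k)) ≤ ‖x k - x (k+1)‖ := hmain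
        _ ≤ cm * ‖x k - x (k+1)‖ := le_mul_of_one_le_left (norm_nonneg _) hcm1
    · obtain ⟨⟨hl0, hl2⟩, hPC⟩ := hI₁ (sel k) hi
      have hd : Metric.infDist (x k) (C (sel k)) = ‖x k - PC (sel k) (x k)‖ := by
        rw [← (hPC (x k)).2, dist_eq_norm]
      have hTx : x k - x (k+1) = lam (sel k) • (x k - PC (sel k) (x k)) := by
        rw [hxk, hT₁ (sel k) hi]
        module
      have hnTx : ‖x k - x (k+1)‖ = lam (sel k) * ‖x k - PC (sel k) (x k)‖ := by
        rw [hTx, norm_smul, Real.norm_eq_abs, abs_of_pos hl0]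
      have hcle : 1/lam (sel k) ≤ cm := by
        have := hcile (sel k); simpa only [hcdef, if_neg hi] using this
      rw [hd, hnTx]
      calc ‖x k - PC (sel k) (x k)‖
          = (1/lam (sel k)) * (lam (sel k) * ‖x k - PC (sel k) (x k)‖) := by
            field_simp
        _ ≤ cm * (lam (sel k) * ‖x k - PC (sel k) (x k)‖) := by
            apply mul_le_mul_of_nonneg_right hcle
            positivity
  -- window sums
  set S : ℕ → ℝ := fun k => ∑ j ∈ Finset.range M, dist (x (k+j)) (x (k+j+1)) with hSdef
  have hSnonneg : ∀ k, 0 ≤ S k := fun k => Finset.sum_nonneg (fun j _ => dist_nonneg)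
  have hwin : ∀ k i, Metric.infDist (x k) (C i) ≤ (cm + 1) * S k := by
    intro k i
    obtain ⟨j0, hj0, hj0s⟩ := hqc k i
    have h1 : Metric.infDist (x k) (C i)
        ≤ Metric.infDist (x (k+j0)) (C i) + dist (x k) (x (k+j0)) :=
      Metric.infDist_le_infDist_add_dist
    have h2 : dist (x k) (x (k + j0))
        ≤ ∑ j ∈ Finset.range j0, dist (x (k+j)) (x (k+j+1)) := by
      exact dist_le_range_sum_dist (fun j => x (k + j)) j0
    have h3 : ∑ j ∈ Finset.range j0, dist (x (k+j)) (x (k+j+1)) ≤ S k := by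
      apply Finset.sum_le_sum_of_subset_of_nonneg (Finset.range_subset_range.2 hj0.le)
      intro j _ _; exact dist_nonneg
    have h4 : Metric.infDist (x (k+j0)) (C i) ≤ cm * dist (x (k+j0)) (x (k+j0+1)) := by
      have := hsd (k+j0)
      rw [hj0s] at this
      rwa [dist_eq_norm]
    have h5 : dist (x (k+j0)) (x (k+j0+1)) ≤ S k :=
      Finset.single_le_sum (f := fun j => dist (x (k+j)) (x (k+j+1)))
        (fun j _ => dist_nonneg) (Finset.mem_range.2 hj0)
    have h6 : cm * dist (x (k+j0)) (x (k+j0+1)) ≤ cm * S k :=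
      mul_le_mul_of_nonneg_left h5 hcm0
    calc Metric.infDist (x k) (C i)
        ≤ Metric.infDist (x (k+j0)) (C i) + dist (x k) (x (k+j0)) := h1
      _ ≤ cm * S k + S k := by linarith
      _ = (cm + 1) * S k := by ring
  have hStend : Filter.Tendsto S Filter.atTop (nhds 0) := by
    have hterm : ∀ j : ℕ, Filter.Tendsto (fun k => dist (x (k+j)) (x (k+j+1)))
        Filter.atTop (nhds 0) := by
      intro j
      have := hsn.comp (Filter.tendsto_add_atTop_nat j)
      simp only [Function.comp_def] at this
      convert this using 2 with k
      rw [dist_eq_norm]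
    have := tendsto_finset_sum (Finset.range M)
      (fun j (_ : j ∈ Finset.range M) => hterm j)
    simpa using this
  -- goal 2
  have goal2 : Filter.Tendsto (fun k => ⨆ i, Metric.infDist (x k) (C i))
      Filter.atTop (nhds 0) := by
    have hupper : Filter.Tendsto (fun k => (cm + 1) * S k) Filter.atTop (nhds 0) := by
      have := hStend.const_mul (cm + 1)
      simpa using this
    refine tendsto_of_tendsto_of_tendsto_of_le_of_le tendsto_const_nhds hupper
      (fun k => ?_) (fun k => ?_)
    · exact Real.iSup_nonneg (fun i => Metric.infDist_nonneg)
    · exact ciSup_le (fun i => hwin k i)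
  refine ⟨goal1, goal2, ?_⟩
  -- weak cluster points
  rintro xbar ⟨φ, hφ, hweak⟩
  rw [Set.mem_iInter]
  intro i
  by_contra hnot
  obtain ⟨f, u, hfa, hfx⟩ :=
    geometric_hahn_banach_closed_point (hC i).2.2 (hC i).2.1 hnot
  obtain ⟨u₀, hu₀⟩ := (InnerProductSpace.toDual ℝ X).surjective f
  have hfval : ∀ y : X, f y = ⟪u₀, y⟫ := by
    intro y; rw [← hu₀]; rfl
  -- distances along the subsequence go to 0
  have hdsub : Filter.Tendsto (fun k => Metric.infDist (x (φ k)) (C i))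
      Filter.atTop (nhds 0) := by
    have hcomp : Filter.Tendsto (fun k => ⨆ j, Metric.infDist (x (φ k)) (C j))
        Filter.atTop (nhds 0) := goal2.comp hφ.tendsto_atTop
    refine tendsto_of_tendsto_of_tendsto_of_le_of_le tendsto_const_nhds hcomp
      (fun k => Metric.infDist_nonneg) (fun k => ?_)
    have hbdd : BddAbove (Set.range (fun j => Metric.infDist (x (φ k)) (C j))) :=
      Set.Finite.bddAbove (Set.finite_range _)
    exact le_ciSup hbdd i
  -- choose near points in C i
  have hnear : ∀ k : ℕ, ∃ p ∈ C i,
      dist (x (φ k)) p < Metric.infDist (x (φ k)) (C i) + 1/(k+1 : ℝ) := by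
    intro k
    apply (Metric.infDist_lt_iff (hC i).1).1
    have : (0:ℝ) < 1/(k+1 : ℝ) := by positivity
    linarith
  choose p hpmem hpdist using hnear
  have hfp : ∀ k, f (p k) < u := fun k => hfa (p k) (hpmem k)
  -- f (p k) → f xbar
  have hdiff0 : Filter.Tendsto (fun k => ⟪p k - x (φ k), u₀⟫) Filter.atTop (nhds 0) := by
    apply squeeze_zero_norm (a := fun k =>
      (Metric.infDist (x (φ k)) (C i) + 1/(k+1 : ℝ)) * ‖u₀‖)
    · intro k
      calc ‖⟪p k - x (φ k), u₀⟫‖ ≤ ‖p k - x (φ k)‖ * ‖u₀‖ := by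
            exact abs_real_inner_le_norm _ _
        _ ≤ (Metric.infDist (x (φ k)) (C i) + 1/(k+1 : ℝ)) * ‖u₀‖ := by
            apply mul_le_mul_of_nonneg_right _ (norm_nonneg _)
            rw [← dist_eq_norm, dist_comm]
            exact (hpdist k).le
    · have h1 : Filter.Tendsto (fun k : ℕ =>
          Metric.infDist (x (φ k)) (C i) + 1/(k+1 : ℝ)) Filter.atTop (nhds 0) := by
        have := hdsub.add tendsto_one_div_add_atTop_nhds_zero_nat
        simpa using this
      have := h1.mul_const ‖u₀‖
      simpa using this
  have hfplim : Filter.Tendsto (fun k => f (p k)) Filter.atTop (nhds (f xbar)) := by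
    have heq : ∀ k, f (p k) = ⟪x (φ k), u₀⟫ + ⟪p k - x (φ k), u₀⟫ := by
      intro k
      rw [hfval, real_inner_comm, inner_sub_left]
      ring
    have hlim : Filter.Tendsto (fun k => ⟪x (φ k), u₀⟫ + ⟪p k - x (φ k), u₀⟫)
        Filter.atTop (nhds (⟪xbar, u₀⟫ + 0)) := (hweak u₀).add hdiff0
    rw [add_zero] at hlim
    have : f xbar = ⟪xbar, u₀⟫ := by rw [hfval, real_inner_comm]
    rw [this]
    simpa [heq] using hlim
  have : f xbar ≤ u := le_of_tendsto hfplim (Filter.Eventually.of_forall (fun k => (hfp k).le))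
  linarith
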